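/- Let R > 0 and m > 0 be real numbers, and set a = −tanh(R)·(2cosh²(R) + 1)/cosh²(R), b = (1/m²)·tanh(R)/(2cosh²(R)), and c = (1/m⁴)·(tanh(R) + tanh³(R))/16. Then for every real x, a·x² + b·x + c ≥ 0 if and only if x₁ ≤ x ≤ x₂, where x₁ = −(1/(4m²))·(2cosh²(R) − 1)/(2cosh²(R) + 1) and x₂ = 1/(4m²). -/

import Mathlib

open Real

/-- With `a, b, c` as in the boundary-term formula, the quadratic
`a x² + b x + c` is nonnegative exactly for `x₁ ≤ x ≤ x₂`, where
`x₁ = -(1/(4m²)) (2 cosh² R - 1)/(2 cosh² R + 1)` and `x₂ = 1/(4m²)`. -/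
theorem stmt_9 (R m a b c x₁ x₂ : ℝ) (hR : 0 < R) (hm : 0 < m)
    (ha : a = -(Real.tanh R * (2 * Real.cosh R ^ 2 + 1) / Real.cosh R ^ 2))
    (hb : b = (1 / m ^ 2) * (Real.tanh R / (2 * Real.cosh R ^ 2)))
    (hc : c = (1 / m ^ 4) * ((Real.tanh R + Real.tanh R ^ 3) / 16))
    (hx₁ : x₁ = -(1 / (4 * m ^ 2)) *
      ((2 * Real.cosh R ^ 2 - 1) / (2 * Real.cosh R ^ 2 + 1)))
    (hx₂ : x₂ = 1 / (4 * m ^ 2)) :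
    ∀ x : ℝ, 0 ≤ a * x ^ 2 + b * x + c ↔ (x₁ ≤ x ∧ x ≤ x₂) := by
  intro x
  have hch : 0 < Real.cosh R := Real.cosh_pos R
  have hsh : 0 < Real.sinh R := by rw [← Real.sinh_zero]; exact Real.sinh_lt_sinh.2 hR
  have ht : Real.tanh R = Real.sinh R / Real.cosh R := Real.tanh_eq_sinh_div_cosh R
  have hid : Real.cosh R ^ 2 - Real.sinh R ^ 2 = 1 := Real.cosh_sq_sub_sinh_sq R
  have hm2 : (0:ℝ) < m ^ 2 := by positivity
  have hch2 : (0:ℝ) < 2 * Real.cosh R ^ 2 + 1 := by positivity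
  have hane : a < 0 := by
    rw [ha, ht]; have : 0 < Real.sinh R / Real.cosh R := div_pos hsh hch
    have : 0 < Real.sinh R / Real.cosh R * (2 * Real.cosh R ^ 2 + 1) / Real.cosh R ^ 2 := by
      positivity
    linarith
  have hkey : a * x ^ 2 + b * x + c = a * ((x - x₁) * (x - x₂)) := by
    rw [ha, hb, hc, hx₁, hx₂, ht]
    have h1 : Real.sinh R ^ 2 = Real.cosh R ^ 2 - 1 := by linarith
    have h2 : Real.sinh R ^ 3 = Real.sinh R * (Real.cosh R ^ 2 - 1) := by
      rw [← h1]; ring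
    field_simp
    ring_nf
    rw [h1]
    ring
  have hlt : x₁ < x₂ := by
    rw [hx₁, hx₂]
    have h1 : 0 < (2 * Real.cosh R ^ 2 - 1) / (2 * Real.cosh R ^ 2 + 1) := by
      apply div_pos _ hch2
      nlinarith [Real.one_le_cosh R]
    have h2 : 0 < 1 / (4 * m ^ 2) := by positivity
    nlinarith
  rw [hkey]
  constructor
  · intro h
    have hp : (x - x₁) * (x - x₂) ≤ 0 := nonpos_of_mul_nonneg_right h hane
    constructor
    · by_contra hc'
      push_neg at hc'
      nlinarith
    · by_contra hc'
      push_neg at hc'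
      nlinarith
  · rintro ⟨h1, h2⟩
    have : (x - x₁) * (x - x₂) ≤ 0 :=
      mul_nonpos_of_nonneg_of_nonpos (by linarith) (by linarith)
    nlinarith
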